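/- Let q be an odd prime power, g ≥ 1, and let P_1,…,P_k be distinct prime polynomials in 𝔽_q[x] with f = P_1 P_2 ⋯ P_k. Then 1 − (q/(q−1)) Σ_{j=1}^k q^{−deg P_j} ≤ ⟨χ_Q(f²)⟩ ≤ 1; in particular ⟨χ_Q(f²)⟩ = 1 + O(Σ_{P | f} 1/|P|) with |P| = q^{deg P}. -/

import Mathlib

open Polynomial UniqueFactorizationMonoid
open scoped Classical

/-- Quadratic residue symbol `(D/P)` for `P` a prime polynomial. -/
noncomputable def resSym {F : Type*} [Field F] (D P : Polynomial F) : ℤ :=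
  if P ∣ D then 0 else if ∃ h : Polynomial F, P ∣ (h ^ 2 - D) then 1 else -1

/-- Jacobi symbol `(D/f)`. -/
noncomputable def jacSym {F : Type*} [Field F] (D f : Polynomial F) : ℤ :=
  ((normalizedFactors f).map fun P => resSym D P).prod

/-- Möbius function of 𝔽_q[x]. -/
noncomputable def moeb {F : Type*} [Field F] (A : Polynomial F) : ℤ :=
  if Squarefree A then (-1) ^ Multiset.card (normalizedFactors A) else 0

/-- Von Mangoldt function of 𝔽_q[x]. -/
noncomputable def vonM {F : Type*} [Field F] (f : Polynomial F) : ℝ :=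
  if h : ∃ P : Polynomial F, P.Monic ∧ Irreducible P ∧ ∃ j : ℕ, 0 < j ∧ f = P ^ j
  then ((h.choose.natDegree : ℕ) : ℝ) else 0

/-- Monic squarefree polynomials of degree `d`. -/
def Hset (F : Type*) [Field F] (d : ℕ) : Set (Polynomial F) :=
  {Q | Q.Monic ∧ Squarefree Q ∧ Q.natDegree = d}

/-- Monic polynomials of degree `d`. -/
def Mset (F : Type*) [Field F] (d : ℕ) : Set (Polynomial F) :=
  {f | f.Monic ∧ f.natDegree = d}

/-- The average over the hyperelliptic ensemble `H_{2g+1}`. -/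
noncomputable def avgH (F : Type*) [Field F] [Fintype F] (g : ℕ) (Φ : Polynomial F → ℝ) : ℝ :=
  (∑ᶠ Q ∈ Hset F (2 * g + 1), Φ Q) /
    (((Fintype.card F : ℝ) - 1) * (Fintype.card F : ℝ) ^ (2 * g))

/-- `t_k(Q)`, the trace of the k-th power of the unitarized Frobenius class. -/
noncomputable def trFrob (F : Type*) [Field F] [Fintype F] (k : ℕ) (Q : Polynomial F) : ℝ :=
  -((Fintype.card F : ℝ) ^ ((k : ℝ) / 2))⁻¹ *
    ∑ᶠ f ∈ Mset F k, vonM f * (jacSym Q f : ℝ)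

def eta (k : ℕ) : ℝ := if Even k then 1 else 0

section Aux
variable {F : Type*} [Field F] [Fintype F]


/-- The finset of monic polynomials of degree `n`. -/
noncomputable def Mfin (F : Type*) [Field F] [Fintype F] (n : ℕ) : Finset (Polynomial F) :=
  (Finset.univ : Finset (Fin n → F)).image
    (fun c => X ^ n + ∑ i : Fin n, C (c i) * X ^ (i : ℕ))

lemma coeff_phi (n : ℕ) (c : Fin n → F) (m : ℕ) :
    (X ^ n + ∑ i : Fin n, C (c i) * X ^ (i : ℕ)).coeff m
      = (if n = m then 1 else 0) + (if h : m < n then c ⟨m, h⟩ else 0) := by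
  rw [coeff_add, coeff_X_pow, finset_sum_coeff]
  congr 1
  · simp [eq_comm]
  · simp only [coeff_C_mul, coeff_X_pow]
    by_cases h : m < n
    · rw [dif_pos h, Finset.sum_eq_single (⟨m, h⟩ : Fin n)]
      · simp
      · intro b _ hb
        have : m ≠ (b : ℕ) := by
          intro he; exact hb (by ext; simp [← he])
        simp [this]
      · simp
    · rw [dif_neg h]
      apply Finset.sum_eq_zero
      intro i _
      have : m ≠ (i : ℕ) := by omega
      simp [this]

lemma mem_Mfin {n : ℕ} {p : Polynomial F} :
    p ∈ Mfin F n ↔ p.Monic ∧ p.natDegree = n := by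
  constructor
  · rintro hp
    simp only [Mfin, Finset.mem_image, Finset.mem_univ, true_and] at hp
    obtain ⟨c, rfl⟩ := hp
    have hdeg : (∑ i : Fin n, C (c i) * X ^ (i : ℕ)).degree < ((n : ℕ) : WithBot ℕ) := by
      apply lt_of_le_of_lt (degree_sum_le _ _)
      refine (Finset.sup_lt_iff (by exact_mod_cast WithBot.bot_lt_coe n)).2 ?_
      intro i _
      exact lt_of_le_of_lt (degree_C_mul_X_pow_le _ _) (by exact_mod_cast i.2)
    have hdeg' : (∑ i : Fin n, C (c i) * X ^ (i : ℕ)).degree < (X ^ n : Polynomial F).degree := by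
      rwa [degree_X_pow]
    have hdegsum : (X ^ n + ∑ i : Fin n, C (c i) * X ^ (i : ℕ)).degree = ((n : ℕ) : WithBot ℕ) := by
      rw [degree_add_eq_left_of_degree_lt hdeg', degree_X_pow]
    have hm : (X ^ n + ∑ i : Fin n, C (c i) * X ^ (i : ℕ)).Monic := by
      have := monic_X_pow (R := F) n
      exact this.add_of_left hdeg'
    exact ⟨hm, natDegree_eq_of_degree_eq_some hdegsum⟩
  · rintro ⟨hm, rfl⟩
    simp only [Mfin, Finset.mem_image, Finset.mem_univ, true_and]
    refine ⟨fun i => p.coeff i, ?_⟩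
    ext m
    rw [coeff_phi]
    rcases lt_trichotomy m p.natDegree with h | h | h
    · simp [h, Ne.symm (Nat.ne_of_lt h)]
    · subst h
      simp [hm.coeff_natDegree]
    · rw [dif_neg (by omega), if_neg (by omega), add_zero,
        coeff_eq_zero_of_natDegree_lt h]

lemma card_Mfin (n : ℕ) : (Mfin F n).card = Fintype.card F ^ n := by
  rw [Mfin, Finset.card_image_of_injective _ ?_, Finset.card_univ, Fintype.card_fun]
  · simp
  · intro c c' h
    funext i
    have := congrArg (fun p => Polynomial.coeff p (i : ℕ)) h
    simp only [coeff_phi] at this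
    have hne : n ≠ (i : ℕ) := by omega
    simpa [hne, i.2] using this

set_option linter.unusedSectionVars false

lemma exists_sq_mul : ∀ (n : ℕ) (f : Polynomial F), f.Monic → f.natDegree = n →
    ∃ a b : Polynomial F, a.Monic ∧ b.Monic ∧ Squarefree b ∧ f = a ^ 2 * b := by
  intro n
  induction n using Nat.strong_induction_on with
  | _ n ih =>
    intro f hf hdeg
    by_cases hsf : Squarefree f
    · exact ⟨1, f, monic_one, hf, hsf, by ring⟩
    · rw [Squarefree] at hsf
      push_neg at hsf
      obtain ⟨x, hxdvd, hxu⟩ := hsf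
      have hx0 : x ≠ 0 := by
        rintro rfl
        exact hf.ne_zero (by simpa using hxdvd)
      obtain ⟨p, hpirr, hpdvd⟩ := WfDvdMonoid.exists_irreducible_factor hxu hx0
      set p' := p * C (p.leadingCoeff)⁻¹ with hp'
      have hp0 : p ≠ 0 := hpirr.ne_zero
      have hlc : p.leadingCoeff ≠ 0 := leadingCoeff_ne_zero.2 hp0
      have hp'm : p'.Monic := monic_mul_leadingCoeff_inv hp0
      have hassoc : Associated p p' :=
        associated_mul_unit_right p _ (isUnit_C.2 (IsUnit.inv (Ne.isUnit hlc)))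
      have hp'irr : Irreducible p' := hassoc.irreducible hpirr
      have hp'dvd : p' ^ 2 ∣ f := by
        have h1 : p' ∣ x := hassoc.symm.dvd.trans hpdvd
        calc p' ^ 2 ∣ x * x := by rw [sq]; exact mul_dvd_mul h1 h1
        _ ∣ f := hxdvd
      obtain ⟨g, hg⟩ := hp'dvd
      have hg0 : g ≠ 0 := by
        rintro rfl
        exact hf.ne_zero (by simpa using hg)
      have hgm : g.Monic := (hp'm.pow 2).of_mul_monic_left (by rwa [← hg])
      have hdp : 0 < p'.natDegree := hp'irr.natDegree_pos
      have hdlt : g.natDegree < n := by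
        have : f.natDegree = (p' ^ 2).natDegree + g.natDegree := by
          rw [hg, natDegree_mul (pow_ne_zero _ hp'm.ne_zero) hg0]
        rw [natDegree_pow] at this
        omega
      obtain ⟨a, b, ham, hbm, hbs, hab⟩ := ih g.natDegree hdlt g hgm rfl
      exact ⟨p' * a, b, hp'm.mul ham, hbm, hbs, by rw [hg, hab]; ring⟩

lemma count_nf_sq_mul {a b : Polynomial F} (ha : a ≠ 0) (hb : b ≠ 0) (p : Polynomial F) :
    Multiset.count p (normalizedFactors (a ^ 2 * b))
      = 2 * Multiset.count p (normalizedFactors a) + Multiset.count p (normalizedFactors b) := by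
  rw [normalizedFactors_mul (pow_ne_zero _ ha) hb, normalizedFactors_pow,
    Multiset.count_add, Multiset.count_nsmul]

lemma sq_mul_unique {a b c d : Polynomial F} (ham : a.Monic) (hbm : b.Monic)
    (hcm : c.Monic) (hdm : d.Monic) (hbs : Squarefree b) (hds : Squarefree d)
    (h : a ^ 2 * b = c ^ 2 * d) : a = c ∧ b = d := by
  have ha0 := ham.ne_zero
  have hb0 := hbm.ne_zero
  have hc0 := hcm.ne_zero
  have hd0 := hdm.ne_zero
  have hnf : normalizedFactors a = normalizedFactors c := by
    ext p
    have h1 := count_nf_sq_mul (F := F) ha0 hb0 p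
    have h2 := count_nf_sq_mul (F := F) hc0 hd0 p
    rw [h] at h1
    have hble : Multiset.count p (normalizedFactors b) ≤ 1 :=
      Multiset.nodup_iff_count_le_one.1
        ((squarefree_iff_nodup_normalizedFactors hb0).1 hbs) p
    have hdle : Multiset.count p (normalizedFactors d) ≤ 1 :=
      Multiset.nodup_iff_count_le_one.1
        ((squarefree_iff_nodup_normalizedFactors hd0).1 hds) p
    omega
  have hac : a = c := eq_of_monic_of_associated ham hcm
    ((associated_iff_normalizedFactors_eq_normalizedFactors ha0 hc0).2 hnf)
  subst hac
  exact ⟨rfl, mul_left_cancel₀ (pow_ne_zero 2 ha0) h⟩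

/-- Monic squarefree polynomials of degree `n`. -/
noncomputable def Sfin (F : Type*) [Field F] [Fintype F] (n : ℕ) : Finset (Polynomial F) :=
  (Mfin F n).filter Squarefree

lemma mem_Sfin {n : ℕ} {p : Polynomial F} :
    p ∈ Sfin F n ↔ p.Monic ∧ Squarefree p ∧ p.natDegree = n := by
  simp only [Sfin, Finset.mem_filter, mem_Mfin]
  tauto

lemma Mfin_eq_biUnion (n : ℕ) :
    Mfin F n = (Finset.range (n / 2 + 1)).biUnion
      (fun d => ((Mfin F d) ×ˢ (Sfin F (n - 2 * d))).image (fun x => x.1 ^ 2 * x.2)) := by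
  ext p
  simp only [Finset.mem_biUnion, Finset.mem_range, Finset.mem_image, Finset.mem_product,
    mem_Mfin, mem_Sfin]
  constructor
  · rintro ⟨hm, rfl⟩
    obtain ⟨a, b, ham, hbm, hbs, hab⟩ := exists_sq_mul p.natDegree p hm rfl
    have hdeg : p.natDegree = 2 * a.natDegree + b.natDegree := by
      rw [hab, natDegree_mul (pow_ne_zero _ ham.ne_zero) hbm.ne_zero, natDegree_pow]
    refine ⟨a.natDegree, ?_, ⟨a, b⟩, ⟨⟨ham, rfl⟩, hbm, hbs, ?_⟩, hab.symm⟩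
    · omega
    · show b.natDegree = p.natDegree - 2 * a.natDegree
      omega
  · rintro ⟨d, hd, ⟨a, b⟩, ⟨⟨ham, rfl⟩, hbm, hbs, hbd⟩, rfl⟩
    refine ⟨(ham.pow 2).mul hbm, ?_⟩
    rw [natDegree_mul (pow_ne_zero _ ham.ne_zero) hbm.ne_zero, natDegree_pow]
    omega

lemma card_Mfin_eq_sum (n : ℕ) :
    Fintype.card F ^ n = ∑ d ∈ Finset.range (n / 2 + 1),
      Fintype.card F ^ d * (Sfin F (n - 2 * d)).card := by
  rw [← card_Mfin (F := F) n, Mfin_eq_biUnion]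
  rw [Finset.card_biUnion]
  · refine Finset.sum_congr rfl fun d _ => ?_
    rw [Finset.card_image_of_injOn, Finset.card_product, card_Mfin]
    rintro ⟨a, b⟩ hab ⟨c, e⟩ hce h
    simp only [Finset.mem_coe, Finset.mem_product, mem_Mfin, mem_Sfin] at hab hce
    have := sq_mul_unique hab.1.1 hab.2.1 hce.1.1 hce.2.1 hab.2.2.1 hce.2.2.1 h
    simp [Prod.ext_iff, this.1, this.2]
  · intro d _ e _ hde
    rw [Function.onFun, Finset.disjoint_left]
    intro p hp1 hp2
    simp only [Finset.mem_image, Finset.mem_product, mem_Mfin, mem_Sfin] at hp1 hp2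
    obtain ⟨⟨a, b⟩, ⟨⟨ham, had⟩, hbm, hbs, hbd⟩, hab⟩ := hp1
    obtain ⟨⟨c, f⟩, ⟨⟨hcm, hcd⟩, hfm, hfs, hfd⟩, hcf⟩ := hp2
    have h : a ^ 2 * b = c ^ 2 * f := by rw [hab, hcf]
    have := (sq_mul_unique ham hbm hcm hfm hbs hfs h).1
    exact hde (by rw [← had, ← hcd, this])

lemma card_Sfin {n : ℕ} (hn : 2 ≤ n) :
    ((Sfin F n).card : ℤ) = (Fintype.card F : ℤ) ^ n - (Fintype.card F : ℤ) ^ (n - 1) := by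
  have h1 := card_Mfin_eq_sum (F := F) n
  have h2 := card_Mfin_eq_sum (F := F) (n - 2)
  have hhalf : (n - 2) / 2 + 1 = n / 2 := by omega
  rw [Finset.sum_range_succ'] at h1
  have hshift : ∀ d, Fintype.card F ^ (d + 1) * (Sfin F (n - 2 * (d + 1))).card
      = Fintype.card F * (Fintype.card F ^ d * (Sfin F (n - 2 - 2 * d)).card) := by
    intro d
    have : n - 2 * (d + 1) = n - 2 - 2 * d := by omega
    rw [this, pow_succ]
    ring
  simp only [hshift] at h1
  rw [← Finset.mul_sum, ← hhalf, ← h2] at h1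
  have : Fintype.card F ^ n = Fintype.card F ^ (n - 1) + (Sfin F n).card := by
    have hpow : Fintype.card F * Fintype.card F ^ (n - 2) = Fintype.card F ^ (n - 1) := by
      rw [← pow_succ']
      congr 1
      omega
    rw [hpow] at h1
    simp only [pow_zero, one_mul, Nat.mul_zero, Nat.sub_zero] at h1
    omega
  zify at this
  push_cast at this ⊢
  linarith

lemma card_dvd_filter_le {n : ℕ} {P : Polynomial F} (hPm : P.Monic) (hP1 : P ≠ 1) :
    (((Mfin F n).filter (fun Q => P ∣ Q)).card : ℝ)
      ≤ (Fintype.card F : ℝ) ^ n / (Fintype.card F : ℝ) ^ P.natDegree := by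
  have hq1 : (1 : ℝ) < (Fintype.card F : ℝ) := by
    exact_mod_cast Fintype.one_lt_card
  have hq0 : (0 : ℝ) < (Fintype.card F : ℝ) := by linarith
  by_cases hle : P.natDegree ≤ n
  · have hsub : (Mfin F n).filter (fun Q => P ∣ Q)
        ⊆ (Mfin F (n - P.natDegree)).image (fun R => P * R) := by
      intro Q hQ
      simp only [Finset.mem_filter, mem_Mfin] at hQ
      obtain ⟨⟨hQm, hQd⟩, R, rfl⟩ := hQ
      simp only [Finset.mem_image, mem_Mfin]
      have hRm : R.Monic := hPm.of_mul_monic_left hQm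
      refine ⟨R, ⟨hRm, ?_⟩, rfl⟩
      rw [natDegree_mul hPm.ne_zero hRm.ne_zero] at hQd
      omega
    calc (((Mfin F n).filter (fun Q => P ∣ Q)).card : ℝ)
        ≤ (((Mfin F (n - P.natDegree)).image (fun R => P * R)).card : ℝ) := by
          exact_mod_cast Finset.card_le_card hsub
      _ ≤ ((Mfin F (n - P.natDegree)).card : ℝ) := by
          exact_mod_cast Finset.card_image_le
      _ = (Fintype.card F : ℝ) ^ (n - P.natDegree) := by
          rw [card_Mfin]; push_cast; ring
      _ = (Fintype.card F : ℝ) ^ n / (Fintype.card F : ℝ) ^ P.natDegree := by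
          rw [eq_div_iff (by positivity), ← pow_add]
          congr 1
          omega
  · have : (Mfin F n).filter (fun Q => P ∣ Q) = ∅ := by
      rw [Finset.filter_eq_empty_iff]
      intro Q hQ hdvd
      rw [mem_Mfin] at hQ
      have := natDegree_le_of_dvd hdvd hQ.1.ne_zero
      omega
    rw [this]
    simp only [Finset.card_empty, Nat.cast_zero]
    positivity


lemma jacSym_sq (k : ℕ) (P : Fin k → Polynomial F)
    (hP : ∀ j, (P j).Monic ∧ Irreducible (P j)) (Q : Polynomial F) :
    jacSym Q ((∏ j, P j) ^ 2) = if ∀ j, ¬ P j ∣ Q then 1 else 0 := by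
  set m : Multiset (Polynomial F) := Multiset.map P Finset.univ.val with hm
  have hprod : (∏ j, P j) = m.prod := rfl
  have hirr : ∀ a ∈ m, Irreducible a := by
    intro a ha
    obtain ⟨j, _, rfl⟩ := Multiset.mem_map.1 ha
    exact (hP j).2
  have hmn : Multiset.map normalize m = m := by
    rw [Multiset.map_congr rfl (fun x hx => ?_), Multiset.map_id]
    obtain ⟨j, _, rfl⟩ := Multiset.mem_map.1 hx
    exact (hP j).1.normalize_eq_self
  have hnf : normalizedFactors ((∏ j, P j) ^ 2) = 2 • m := by
    rw [normalizedFactors_pow, hprod, normalizedFactors_prod_eq _ hirr, hmn]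
  rw [jacSym, hnf, Multiset.map_nsmul, Multiset.prod_nsmul]
  have hms : (Multiset.map (fun p => resSym Q p) m).prod = ∏ j, resSym Q (P j) := by
    rw [hm, Multiset.map_map]
    rfl
  rw [hms, ← Finset.prod_pow]
  by_cases h : ∀ j, ¬ P j ∣ Q
  · rw [if_pos h]
    apply Finset.prod_eq_one
    intro j _
    rw [resSym, if_neg (h j)]
    split <;> norm_num
  · rw [if_neg h]
    push_neg at h
    obtain ⟨j, hj⟩ := h
    apply Finset.prod_eq_zero (Finset.mem_univ j)
    rw [resSym, if_pos hj]
    norm_num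

end Aux

/-- Lemma 3.2: for `f = P_1 ⋯ P_k` a product of distinct primes,
`1 - (q/(q-1)) Σ_j q^{-deg P_j} ≤ ⟨χ_Q(f²)⟩ ≤ 1`. -/
theorem stmt4 (q : ℕ) (hq : Odd q) (F : Type*) [Field F] [Fintype F]
    (hF : Fintype.card F = q) (g : ℕ) (hg : 1 ≤ g) (k : ℕ) (hk : 1 ≤ k)
    (P : Fin k → Polynomial F) (hinj : Function.Injective P)
    (hP : ∀ j, (P j).Monic ∧ Irreducible (P j)) (f : Polynomial F) (hf : f = ∏ j, P j) :
    1 - ((q : ℝ) / ((q : ℝ) - 1)) * ∑ j, ((q : ℝ) ^ (P j).natDegree)⁻¹ ≤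
        avgH F g (fun Q => (jacSym Q (f ^ 2) : ℝ)) ∧
      avgH F g (fun Q => (jacSym Q (f ^ 2) : ℝ)) ≤ 1 := by
  subst hf
  subst hF
  set q : ℕ := Fintype.card F with hq'
  have hq2 : 2 ≤ q := Fintype.one_lt_card
  have hq3 : 3 ≤ q := by
    rcases Nat.lt_or_ge q 3 with h | h
    · interval_cases q
      · exact absurd hq (by decide)
    · exact h
  have hqR : (3 : ℝ) ≤ (q : ℝ) := by exact_mod_cast hq3
  have hq1R : (1 : ℝ) < (q : ℝ) := by linarith
  have hq0R : (0 : ℝ) < (q : ℝ) := by linarith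
  set n : ℕ := 2 * g + 1 with hn
  set D : ℝ := ((q : ℝ) - 1) * (q : ℝ) ^ (2 * g) with hD
  have hD0 : 0 < D := by
    apply mul_pos (by linarith)
    positivity
  set T : Finset (Polynomial F) :=
    (Sfin F n).filter (fun Q => ∀ j, ¬ P j ∣ Q) with hT
  have hHset : Hset F n = ↑(Sfin F n) := by
    ext p
    rw [Finset.mem_coe, mem_Sfin]
    exact Iff.rfl
  have hnum : (∑ᶠ Q ∈ Hset F n, ((jacSym Q ((∏ j, P j) ^ 2) : ℤ) : ℝ)) = (T.card : ℝ) := by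
    rw [hHset, finsum_mem_coe_finset, hT, ← Finset.sum_boole]
    refine Finset.sum_congr rfl fun Q _ => ?_
    rw [jacSym_sq k P hP Q]
    split <;> norm_num
  have havg : avgH F g (fun Q => ((jacSym Q ((∏ j, P j) ^ 2) : ℤ) : ℝ)) = (T.card : ℝ) / D := by
    rw [avgH, hnum]
  have hcardS : ((Sfin F n).card : ℝ) = D := by
    have h1 := card_Sfin (F := F) (n := n) (by omega)
    have h2 : ((Sfin F n).card : ℝ) = (q : ℝ) ^ n - (q : ℝ) ^ (n - 1) := by
      exact_mod_cast h1
    rw [h2, hD]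
    have hn1 : n - 1 = 2 * g := by omega
    have hn2 : n = 2 * g + 1 := rfl
    rw [hn1, hn2, pow_succ]
    ring
  constructor
  · rw [havg]
    -- lower bound
    set c : ℝ := ((q : ℝ) / ((q : ℝ) - 1)) * ∑ j, ((q : ℝ) ^ (P j).natDegree)⁻¹ with hc
    rw [sub_le_iff_le_add, div_add' _ _ _ (ne_of_gt hD0), le_div_iff₀ hD0, one_mul]
    -- reduces to D ≤ T.card + c * D
    set B : ℝ := ∑ j, (q : ℝ) ^ n / (q : ℝ) ^ (P j).natDegree with hB
    have hBD : B = c * D := by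
      rw [hB, hc, hD, Finset.mul_sum, Finset.sum_mul]
      refine Finset.sum_congr rfl fun j _ => ?_
      have hd0 : ((q : ℝ) ^ (P j).natDegree) ≠ 0 := by positivity
      have hqn : (q : ℝ) ^ n = (q : ℝ) ^ (2 * g) * (q : ℝ) := by rw [hn, pow_succ]
      rw [hqn, div_eq_iff hd0]
      have hq10 : (q : ℝ) - 1 ≠ 0 := by linarith
      field_simp
    have hbad : ((Sfin F n).card : ℝ) - (T.card : ℝ) ≤ B := by
      have hsplit : T.card + ((Sfin F n).filter (fun Q => ¬ ∀ j, ¬ P j ∣ Q)).card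
          = (Sfin F n).card := Finset.card_filter_add_card_filter_not _
      have hsub : (Sfin F n).filter (fun Q => ¬ ∀ j, ¬ P j ∣ Q)
          ⊆ (Finset.univ : Finset (Fin k)).biUnion
            (fun j => (Mfin F n).filter (fun Q => P j ∣ Q)) := by
        intro Q hQ
        simp only [Finset.mem_filter, mem_Sfin, not_forall, not_not] at hQ
        obtain ⟨⟨hQm, hQs, hQd⟩, j, hj⟩ := hQ
        simp only [Finset.mem_biUnion, Finset.mem_filter, mem_Mfin]
        exact ⟨j, Finset.mem_univ j, ⟨hQm, hQd⟩, hj⟩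
      have hcard : (((Sfin F n).filter (fun Q => ¬ ∀ j, ¬ P j ∣ Q)).card : ℝ) ≤ B := by
        calc (((Sfin F n).filter (fun Q => ¬ ∀ j, ¬ P j ∣ Q)).card : ℝ)
            ≤ (((Finset.univ : Finset (Fin k)).biUnion
                (fun j => (Mfin F n).filter (fun Q => P j ∣ Q))).card : ℝ) := by
              exact_mod_cast Finset.card_le_card hsub
          _ ≤ ∑ j, (((Mfin F n).filter (fun Q => P j ∣ Q)).card : ℝ) := by
              exact_mod_cast Finset.card_biUnion_le
          _ ≤ B := by
              refine Finset.sum_le_sum fun j _ => ?_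
              refine card_dvd_filter_le (hP j).1 ?_
              intro h1
              exact (hP j).2.not_isUnit (h1 ▸ isUnit_one)
      have : ((Sfin F n).card : ℝ) = (T.card : ℝ)
          + (((Sfin F n).filter (fun Q => ¬ ∀ j, ¬ P j ∣ Q)).card : ℝ) := by
        exact_mod_cast hsplit.symm
      linarith
    rw [hcardS] at hbad
    linarith
  · rw [havg, div_le_one hD0, ← hcardS]
    exact_mod_cast Finset.card_le_card (Finset.filter_subset _ _)
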